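/- For every ε with 0 < ε < 1/12 there exist a real X = X(ε) > 0 and Δ₀ = Δ₀(ε) such that for every real Δ ≥ Δ₀, setting I = ⌈X·ln Δ⌉, the sequences (L_i) and (T_i) satisfy L_I > 10·T_I and L_I > Δ^{9/10} and T_I > Δ^{9/10}. -/

import Mathlib

lemma aux_exp_div {x : ℝ} (h0 : 0 ≤ x) (h : x < 1) :
    Real.exp (-(x/(1-x))) ≤ 1 - x := by
  have h1 : (0:ℝ) < 1 - x := by linarith
  have h2 : x/(1-x) + 1 ≤ Real.exp (x/(1-x)) := Real.add_one_le_exp _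
  have h3 : x/(1-x) + 1 = 1/(1-x) := by field_simp; ring
  have h4 : 1/(1-x) ≤ Real.exp (x/(1-x)) := by linarith
  rw [Real.exp_neg]
  calc (Real.exp (x/(1-x)))⁻¹ ≤ (1/(1-x))⁻¹ := by
        apply inv_anti₀ (by positivity) h4
    _ = 1 - x := by field_simp

lemma aux_exp_le_one_sub {u : ℝ} (h0 : 0 ≤ u) (h : u ≤ 1/2) :
    Real.exp (-(2*u)) ≤ 1 - u := by
  have h1 : (0:ℝ) < 1 - u := by linarith
  have h5 : u/(1-u) ≤ 2*u := by rw [div_le_iff₀ h1]; nlinarith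
  calc Real.exp (-(2*u)) ≤ Real.exp (-(u/(1-u))) := by
        apply Real.exp_le_exp.mpr; linarith
    _ ≤ 1 - u := aux_exp_div h0 (by linarith)

lemma aux_log_one_sub {x : ℝ} (h0 : 0 ≤ x) (h : x ≤ 1/2) :
    -(x*(1+2*x)) ≤ Real.log (1-x) := by
  have h1 : (0:ℝ) < 1 - x := by linarith
  have h2 : x/(1-x) ≤ x*(1+2*x) := by
    rw [div_le_iff₀ h1]
    nlinarith [mul_nonneg (mul_nonneg h0 h0) (by linarith : (0:ℝ) ≤ 1-2*x)]
  have h3 : Real.exp (-(x/(1-x))) ≤ 1-x := aux_exp_div h0 (by linarith)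
  have h4 := (Real.le_log_iff_exp_le h1).mpr h3
  linarith

lemma aux_log_le_sqrt {y : ℝ} (h : 1 ≤ y) : Real.log y ≤ 2*Real.sqrt y := by
  have h1 : Real.log y = 2 * Real.log (Real.sqrt y) := by
    rw [Real.log_sqrt (by linarith)]; ring
  have h2 : Real.log (Real.sqrt y) ≤ Real.sqrt y - 1 :=
    Real.log_le_sub_one_of_pos (Real.sqrt_pos.mpr (by linarith))
  nlinarith [Real.sqrt_nonneg y]

/-- The sequences `(L_i, T_i)` of the paper: `L₀ = (1+ε)Δ`, `T₀ = Δ`, and with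
`keep_i = (1 − 1/(L_i ln Δ))^{T_i}` (real power),
`L_{i+1} = L_i keep_i² − Δ^{2/3}` and
`T_{i+1} = T_i (1 − ((1−ε/2)/ln Δ) keep_i²) keep_i + Δ^{2/3}`. -/
noncomputable def LTseq (ε Δ : ℝ) : ℕ → ℝ × ℝ
  | 0 => ((1 + ε) * Δ, Δ)
  | n + 1 =>
      let L := (LTseq ε Δ n).1
      let T := (LTseq ε Δ n).2
      let keep := (1 - 1 / (L * Real.log Δ)) ^ T
      (L * keep ^ 2 - Δ ^ ((2 : ℝ) / 3),
       T * (1 - ((1 - ε / 2) / Real.log Δ) * keep ^ 2) * keep + Δ ^ ((2 : ℝ) / 3))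

set_option maxHeartbeats 1000000 in
/-- For every `0 < ε < 1/12` there are `X = X(ε) > 0` and `Δ₀ = Δ₀(ε)` such that
for all `Δ ≥ Δ₀`, with `I = ⌈X ln Δ⌉`, we have `L_I > 10 T_I` and
`L_I, T_I > Δ^{9/10}`. -/
theorem stmt5 (ε : ℝ) (hε0 : 0 < ε) (hε : ε < 1 / 12) :
    ∃ X : ℝ, 0 < X ∧ ∃ Δ₀ : ℝ, ∀ Δ : ℝ, Δ₀ ≤ Δ →
      (LTseq ε Δ ⌈X * Real.log Δ⌉₊).1 > 10 * (LTseq ε Δ ⌈X * Real.log Δ⌉₊).2 ∧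
      (LTseq ε Δ ⌈X * Real.log Δ⌉₊).1 > Δ ^ ((9 : ℝ) / 10) ∧
      (LTseq ε Δ ⌈X * Real.log Δ⌉₊).2 > Δ ^ ((9 : ℝ) / 10) := by
  refine ⟨30/ε, by positivity, Real.exp (10000/ε), fun Δ hΔ => ?_⟩
  have hΔpos : 0 < Δ := lt_of_lt_of_le (Real.exp_pos _) hΔ
  set l := Real.log Δ with hl
  have hlam : 10000/ε ≤ l := (Real.le_log_iff_exp_le hΔpos).mpr hΔ
  have hεe : (12:ℝ) < 1/ε := by rw [lt_div_iff₀ hε0]; linarith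
  have hlam0 : (120000:ℝ) ≤ l := by
    have : (120000:ℝ) ≤ 10000/ε := by
      rw [le_div_iff₀ hε0]; nlinarith
    linarith
  have hlpos : (0:ℝ) < l := by linarith
  have h10000 : (10000:ℝ) ≤ ε * l := by
    rw [div_le_iff₀ hε0] at hlam; linarith
  have hΔeq : Δ = Real.exp l := (Real.exp_log hΔpos).symm
  have h23 : Δ ^ ((2:ℝ)/3) = Real.exp (2/3*l) := by
    rw [Real.rpow_def_of_pos hΔpos, mul_comm]
  have hsq : Real.sqrt l ≤ l / 300 := by
    have h300 : (300:ℝ) ≤ Real.sqrt l := by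
      rw [show (300:ℝ) = Real.sqrt (300^2) by rw [Real.sqrt_sq]; norm_num]
      exact Real.sqrt_le_sqrt (by nlinarith)
    nlinarith [Real.sq_sqrt hlpos.le, Real.sqrt_nonneg l]
  have hlog : Real.log l ≤ l/150 :=
    le_trans (aux_log_le_sqrt (by linarith)) (by linarith)
  have hmaster : l^2 ≤ Real.exp (17*l/60 - 8) := by
    have h1 : l^2 = Real.exp (2 * Real.log l) := by
      rw [← Real.exp_log (show (0:ℝ) < l^2 by positivity)]
      congr 1
      rw [Real.log_pow]; push_cast; ring
    rw [h1]; exact Real.exp_le_exp.mpr (by linarith)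
  -- the key induction
  have key : ∀ i : ℕ, (i:ℝ) ≤ (30/ε)*l + 1 →
      Real.exp (l - 4*(i:ℝ)/l) ≤ (LTseq ε Δ i).1 ∧
      Real.exp (l - 4*(i:ℝ)/l) ≤ (LTseq ε Δ i).2 ∧
      (1+ε) * (LTseq ε Δ i).2 ≤ (LTseq ε Δ i).1 * Real.exp (-(ε*(i:ℝ)/4)/l) := by
    intro i
    induction i with
    | zero =>
      intro _
      have e0 : l - 4*((0:ℕ):ℝ)/l = l := by push_cast; field_simp; ring
      have e1 : Real.exp (-(ε*((0:ℕ):ℝ)/4)/l) = 1 := by push_cast; norm_num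
      refine ⟨?_, ?_, ?_⟩
      · show Real.exp (l - 4*((0:ℕ):ℝ)/l) ≤ (1+ε)*Δ
        rw [e0, ← hΔeq]; linarith [mul_nonneg hε0.le hΔpos.le]
      · show Real.exp (l - 4*((0:ℕ):ℝ)/l) ≤ Δ
        rw [e0, ← hΔeq]
      · show (1+ε) * Δ ≤ (1+ε)*Δ * Real.exp (-(ε*((0:ℕ):ℝ)/4)/l)
        rw [e1]; linarith [mul_nonneg hε0.le hΔpos.le]
    | succ n ih =>
      intro hn1
      have hcast : ((n+1:ℕ):ℝ) = (n:ℝ)+1 := by push_cast; ring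
      have hn1' : (n:ℝ) ≤ (30/ε)*l + 1 := by rw [hcast] at hn1; linarith
      have hnX : (n:ℝ) ≤ (30/ε)*l := by rw [hcast] at hn1; linarith
      obtain ⟨h1, h2, h3⟩ := ih hn1'
      set L := (LTseq ε Δ n).1 with hLdef
      set T := (LTseq ε Δ n).2 with hTdef
      have hunf1 : (LTseq ε Δ (n+1)).1
          = L * ((1 - 1 / (L * l)) ^ T)^2 - Δ^((2:ℝ)/3) := rfl
      have hunf2 : (LTseq ε Δ (n+1)).2
          = T * (1 - ((1-ε/2)/l) * ((1 - 1 / (L * l)) ^ T)^2) * ((1 - 1 / (L * l)) ^ T)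
            + Δ^((2:ℝ)/3) := rfl
      clear_value L T
      set v := 1/l with hv
      have hvpos : 0 < v := by positivity
      have hvl : v * l = 1 := by rw [hv]; field_simp
      have hv40 : v ≤ ε/40 := by
        rw [hv, div_le_div_iff₀ hlpos (by norm_num)]; linarith
      have hv12 : v ≤ 1/2 := by linarith
      have hexp_pos := Real.exp_pos (l - 4*(n:ℝ)/l)
      have hLpos : 0 < L := lt_of_lt_of_le hexp_pos h1
      have hTpos : 0 < T := lt_of_lt_of_le hexp_pos h2
      set s := Real.exp (-(ε*(n:ℝ)/4)/l) with hs
      have hspos : 0 < s := Real.exp_pos _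
      have hsle1 : s ≤ 1 := by
        rw [hs]; apply Real.exp_le_one_iff.mpr
        have h' : 0 ≤ (ε*(n:ℝ)/4)/l := by positivity
        rw [neg_div]; linarith
      have hs8 : Real.exp (-8) ≤ s := by
        rw [hs]; apply Real.exp_le_exp.mpr
        have hεn : ε*(n:ℝ) ≤ 30*l := by
          have h' := mul_le_mul_of_nonneg_left hnX hε0.le
          have e : ε * ((30/ε)*l) = 30*l := by field_simp
          rw [e] at h'; linarith
        have h'' : (ε*(n:ℝ)/4)/l ≤ 8 := by
          rw [div_le_iff₀ hlpos]; linarith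
        rw [neg_div]; linarith
      have hTL : (1+ε)*T ≤ L := by
        calc (1+ε)*T ≤ L * s := h3
          _ ≤ L * 1 := mul_le_mul_of_nonneg_left hsle1 hLpos.le
          _ = L := by ring
      have hTleL : T ≤ L := by linarith [mul_nonneg hε0.le hTpos.le]
      -- lower bounds exp(19l/20) ≤ L, T
      have hfrac : 4*(n:ℝ)/l ≤ l/20 := by
        have a2 : 4*(n:ℝ)/l ≤ 120/ε := by
          rw [div_le_iff₀ hlpos]
          have e2 : 120 / ε * l = 4*(30/ε*l) := by ring
          linarith
        have a3 : (120:ℝ)/ε ≤ l/20 := by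
          rw [div_le_div_iff₀ hε0 (by norm_num)]; linarith
        linarith
      have hL19 : Real.exp (19*l/20) ≤ L :=
        le_trans (Real.exp_le_exp.mpr (by linarith)) h1
      have hT19 : Real.exp (19*l/20) ≤ T :=
        le_trans (Real.exp_le_exp.mpr (by linarith)) h2
      have h19big : 120/ε ≤ Real.exp (19*l/20) := by
        have hb := Real.add_one_le_exp (19*l/20)
        have h' : (120:ℝ)/ε ≤ 19*l/20 := by
          rw [div_le_iff₀ hε0]; linarith
        linarith
      -- x
      set x := 1 / (L * l) with hxdef
      have hxpos : 0 < x := by positivity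
      have hxeps : x ≤ ε/120 * v := by
        have hLe : 120/ε ≤ L := le_trans h19big hL19
        have h120L : 120 ≤ ε * L := by rw [div_le_iff₀ hε0] at hLe; linarith
        have hεv : ε/120 * v = ε/(120*l) := by rw [hv]; ring
        rw [hxdef, hεv, div_le_div_iff₀ (by positivity) (by positivity)]
        have h2' := mul_le_mul_of_nonneg_right h120L hlpos.le
        linarith
      have hεv1 : ε*v ≤ v := by
        linarith [mul_nonneg (by linarith : (0:ℝ) ≤ 1-ε) hvpos.le]
      have hx4 : 4*x ≤ v := by linarith
      have hx12 : x ≤ 1/2 := by linarith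
      have hbase : 0 < 1 - x := by linarith
      set keep := (1 - x) ^ T with hkdef
      have hkpos : 0 < keep := Real.rpow_pos_of_pos hbase T
      have hkle1 : keep ≤ 1 := Real.rpow_le_one (by linarith) (by linarith) hTpos.le
      -- rho
      set ρ := T * x with hρdef
      have hρpos : 0 < ρ := by positivity
      have hLne : L ≠ 0 := ne_of_gt hLpos
      have hlne : l ≠ 0 := ne_of_gt hlpos
      have hLx : L * x = v := by rw [hxdef, hv]; field_simp
      have hρv : (1+ε)*ρ ≤ v := by
        have h' : ((1+ε)*T)*x ≤ L*x := mul_le_mul_of_nonneg_right hTL hxpos.le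
        rw [hLx] at h'
        calc (1+ε)*ρ = ((1+ε)*T)*x := by rw [hρdef]; ring
          _ ≤ v := h'
      have hρ1 : ρ ≤ v := by linarith [mul_nonneg hε0.le hρpos.le]
      have hρle1 : ρ ≤ 1 := by linarith
      -- keep bounds
      have hkeep_ub : keep ≤ Real.exp (-ρ) := by
        rw [hkdef, Real.rpow_def_of_pos hbase]
        apply Real.exp_le_exp.mpr
        have hlog1 : Real.log (1-x) ≤ -x := by
          have := Real.log_le_sub_one_of_pos hbase; linarith
        calc Real.log (1-x) * T ≤ (-x) * T := mul_le_mul_of_nonneg_right hlog1 hTpos.le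
          _ = -ρ := by rw [hρdef]; ring
      have hkeep_lb : Real.exp (-(ρ + 2*x)) ≤ keep := by
        rw [hkdef, Real.rpow_def_of_pos hbase]
        apply Real.exp_le_exp.mpr
        have hlog2 := aux_log_one_sub hxpos.le hx12
        have e : -(x*(1+2*x)) * T = -(ρ + 2*x*ρ) := by rw [hρdef]; ring
        have h' : -(ρ + 2*x) ≤ -(x*(1+2*x)) * T := by
          rw [e]
          linarith [mul_nonneg hxpos.le (by linarith : (0:ℝ) ≤ 1 - ρ)]
        calc -(ρ + 2*x) ≤ -(x*(1+2*x)) * T := h'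
          _ ≤ Real.log (1-x) * T := mul_le_mul_of_nonneg_right hlog2 hTpos.le
      have hkeep2_lb : Real.exp (-(2*ρ + 4*x)) ≤ keep^2 := by
        have hm := mul_le_mul hkeep_lb hkeep_lb (Real.exp_pos _).le hkpos.le
        calc Real.exp (-(2*ρ+4*x))
            = Real.exp (-(ρ+2*x)) * Real.exp (-(ρ+2*x)) := by
              rw [← Real.exp_add]; ring_nf
          _ ≤ keep * keep := hm
          _ = keep^2 := (sq keep).symm
      have hkeep2_3 : Real.exp (-(3*v)) ≤ keep^2 :=
        le_trans (Real.exp_le_exp.mpr (by linarith)) hkeep2_lb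
      have hkeep2_le1 : keep^2 ≤ 1 := by
        have h' : keep*keep ≤ 1*1 := mul_le_mul hkle1 hkle1 hkpos.le zero_le_one
        calc keep^2 = keep*keep := sq keep
          _ ≤ 1 := by linarith
      have hk2v : Real.exp (-(2*v)) ≤ keep :=
        le_trans (Real.exp_le_exp.mpr (by linarith)) hkeep_lb
      have hkhalf : 1/2 ≤ keep := by
        have := Real.add_one_le_exp (-(2*v))
        linarith [hk2v]
      -- c
      have hc0 : 0 ≤ (1-ε/2)/l := div_nonneg (by linarith) hlpos.le
      have hcv : (1-ε/2)/l = (1-ε/2)*v := by rw [hv]; ring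
      have hck2 : (1-ε/2)/l * keep^2 ≤ v := by
        rw [hcv]
        have h' : (1-ε/2)*v*keep^2 ≤ (1-ε/2)*v*1 :=
          mul_le_mul_of_nonneg_left hkeep2_le1
            (mul_nonneg (by linarith) hvpos.le)
        linarith [mul_nonneg (by linarith : (0:ℝ) ≤ ε/2) hvpos.le]
      have hfac_pos : 0 ≤ 1 - (1-ε/2)/l * keep^2 := by linarith [hv12]
      have hrpow_nn : 0 ≤ Δ^((2:ℝ)/3) := Real.rpow_nonneg hΔpos.le _
      have hsplit : Real.exp (l - 4*((n:ℝ)+1)/l)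
          = Real.exp (l - 4*(n:ℝ)/l) * Real.exp (-(4*v)) := by
        rw [← Real.exp_add, hv]; congr 1; field_simp; ring
      have hv4half : (1:ℝ)/2 ≤ Real.exp (-(4*v)) := by
        have := Real.add_one_le_exp (-(4*v))
        linarith
      refine ⟨?_, ?_, ?_⟩
      -- Goal 1 : L lower bound
      · rw [hunf1, hcast, hsplit, h23]
        have s1 : L * Real.exp (-(3*v)) ≤ L * keep^2 :=
          mul_le_mul_of_nonneg_left hkeep2_3 hLpos.le
        have f1 : Real.exp (-(3*v)) - Real.exp (-(4*v))
            = Real.exp (-(4*v)) * (Real.exp v - 1) := by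
          rw [mul_sub, ← Real.exp_add, mul_one]; ring_nf
        have f2 : v ≤ Real.exp v - 1 := by linarith [Real.add_one_le_exp v]
        have f4 : 1/2 * v ≤ Real.exp (-(3*v)) - Real.exp (-(4*v)) := by
          rw [f1]
          exact mul_le_mul hv4half f2 hvpos.le (Real.exp_pos _).le
        have g1 : Real.exp (2/3*l) * (2*l) ≤ Real.exp (19*l/20) := by
          have e1 : Real.exp (19*l/20) = Real.exp (2/3*l) * Real.exp (17*l/60) := by
            rw [← Real.exp_add]; ring_nf
          have e2 : 2*l ≤ Real.exp (17*l/60) := by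
            have i1 : 2*l ≤ l^2 := by
              have h' := mul_nonneg hlpos.le (by linarith : (0:ℝ) ≤ l - 2)
              linarith [h']
            have i2 : Real.exp (17*l/60 - 8) ≤ Real.exp (17*l/60) :=
              Real.exp_le_exp.mpr (by linarith)
            linarith [hmaster]
          rw [e1]
          exact mul_le_mul_of_nonneg_left e2 (Real.exp_pos _).le
        have s2 : Real.exp (2/3*l) ≤ L * Real.exp (-(3*v)) - L * Real.exp (-(4*v)) := by
          have m1 : Real.exp (19*l/20) * (1/2*v) ≤ L * (Real.exp (-(3*v)) - Real.exp (-(4*v))) :=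
            mul_le_mul hL19 f4 (by positivity) hLpos.le
          have m2 : Real.exp (2/3*l) ≤ Real.exp (19*l/20) * (1/2*v) := by
            have hmm := mul_le_mul_of_nonneg_right g1 (le_of_lt (by positivity : (0:ℝ) < 1/2*v))
            have e3 : Real.exp (2/3*l) * (2*l) * (1/2*v) = Real.exp (2/3*l) := by
              have e4 : (2*l) * (1/2*v) = v*l := by ring
              rw [mul_assoc, e4, hvl, mul_one]
            rw [e3] at hmm; linarith
          linarith [m1, m2, mul_sub L (Real.exp (-(3*v))) (Real.exp (-(4*v)))]
        have s3 : Real.exp (l - 4*(n:ℝ)/l) * Real.exp (-(4*v)) ≤ L * Real.exp (-(4*v)) :=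
          mul_le_mul_of_nonneg_right h1 (Real.exp_pos _).le
        linarith
      -- Goal 2 : T lower bound
      · rw [hunf2, hcast, hsplit]
        have u1 : Real.exp (-(2*v)) ≤ 1 - (1-ε/2)/l * keep^2 := by
          have ha := aux_exp_le_one_sub hvpos.le hv12
          linarith [hck2]
        have u2 : T * Real.exp (-(2*v)) * Real.exp (-(2*v))
            ≤ T * (1 - (1-ε/2)/l * keep^2) * keep := by
          apply mul_le_mul _ hk2v (Real.exp_pos _).le
            (mul_nonneg hTpos.le hfac_pos)
          exact mul_le_mul_of_nonneg_left u1 hTpos.le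
        have u3 : T * Real.exp (-(2*v)) * Real.exp (-(2*v)) = T * Real.exp (-(4*v)) := by
          rw [mul_assoc, ← Real.exp_add]; ring_nf
        have u4 : Real.exp (l - 4*(n:ℝ)/l) * Real.exp (-(4*v)) ≤ T * Real.exp (-(4*v)) :=
          mul_le_mul_of_nonneg_right h2 (Real.exp_pos _).le
        rw [u3] at u2
        linarith [hrpow_nn]
      -- Goal 3 : ratio bound
      · rw [hunf1, hunf2, hcast]
        set q := Real.exp (-(ε/4)/l) with hq
        have hqpos : 0 < q := Real.exp_pos _
        have hqle1 : q ≤ 1 := by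
          rw [hq]; apply Real.exp_le_one_iff.mpr
          have h' : 0 ≤ (ε/4)/l := by positivity
          rw [neg_div]; linarith
        have hqsplit : Real.exp (-(ε*((n:ℝ)+1)/4)/l) = s * q := by
          rw [hs, hq, ← Real.exp_add, ← add_div]
          congr 1; ring
        rw [hqsplit]
        have hεv4 : (ε/4)/l = ε/4*v := by rw [hv]; ring
        have g2 : Real.exp (-(ε/4*v + (ρ + 2*x))) ≤ q * keep := by
          have e : Real.exp (-(ε/4*v + (ρ + 2*x))) = q * Real.exp (-(ρ+2*x)) := by
            rw [hq, ← Real.exp_add]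
            congr 1
            rw [hv]; ring
          rw [e]
          exact mul_le_mul_of_nonneg_left hkeep_lb hqpos.le
        have g3 : 1 - ε/4*v - ρ - 2*x ≤ q*keep := by
          have := Real.add_one_le_exp (-(ε/4*v + (ρ + 2*x)))
          linarith [g2]
        have g4 : (1-ε/2)*v * (1 - (2*ρ + 4*x)) ≤ (1-ε/2)/l * keep^2 := by
          rw [hcv]
          apply mul_le_mul_of_nonneg_left _ (mul_nonneg (by linarith) hvpos.le)
          have := Real.add_one_le_exp (-(2*ρ + 4*x))
          linarith [hkeep2_lb]
        have hρ2 : ρ ≤ (1-ε/2)*v - (2*ε/5)*v := by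
          have hh : v ≤ (1+ε)*((1-ε/2)*v - (2*ε/5)*v) := by
            have h' := mul_nonneg (mul_nonneg hε0.le hvpos.le) (by linarith : (0:ℝ) ≤ 1-9*ε)
            linarith [h']
          have h2' : (1+ε)*ρ ≤ (1+ε)*((1-ε/2)*v - (2*ε/5)*v) := le_trans hρv hh
          exact le_of_mul_le_mul_left h2' (by linarith)
        have hG : ε/20*v ≤ q*keep + (1-ε/2)/l * keep^2 - 1 := by
          have i1 : 2*ρ + 4*x ≤ 3*v := by linarith
          have i2 : (1-ε/2)*v ≤ v := by linarith [mul_nonneg (by linarith : (0:ℝ) ≤ ε/2) hvpos.le]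
          have b1 : (1-ε/2)*v * (2*ρ + 4*x) ≤ 3*(v*v) := by
            calc (1-ε/2)*v * (2*ρ + 4*x) ≤ v * (2*ρ + 4*x) :=
                  mul_le_mul_of_nonneg_right i2 (by linarith)
              _ ≤ v * (3*v) := mul_le_mul_of_nonneg_left i1 hvpos.le
              _ = 3*(v*v) := by ring
          have b2 : v*v ≤ ε/40*v := mul_le_mul_of_nonneg_right hv40 hvpos.le
          have b3 : 2*x ≤ ε/60*v := by linarith
          linarith [g3, g4, hρ2, b1, b2, b3]
        -- main assembly
        have hG' : 3 * Real.exp (2/3*l)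
            ≤ (L * s) * (keep * (q*keep + (1-ε/2)/l * keep^2 - 1)) := by
          have p1 : Real.exp (19*l/20) * Real.exp (-8) ≤ L * s :=
            mul_le_mul hL19 hs8 (Real.exp_pos _).le hLpos.le
          have p2 : 1/2 * (ε/20*v) ≤ keep * (q*keep + (1-ε/2)/l * keep^2 - 1) :=
            mul_le_mul hkhalf hG (by positivity) hkpos.le
          have p3 : (Real.exp (19*l/20) * Real.exp (-8)) * (1/2 * (ε/20*v))
              ≤ (L * s) * (keep * (q*keep + (1-ε/2)/l * keep^2 - 1)) :=
            mul_le_mul p1 p2 (by positivity) (by positivity)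
          have p4 : 3 * Real.exp (2/3*l)
              ≤ (Real.exp (19*l/20) * Real.exp (-8)) * (1/2 * (ε/20*v)) := by
            have e1 : Real.exp (19*l/20) * Real.exp (-8)
                = Real.exp (2/3*l) * Real.exp (17*l/60 - 8) := by
              rw [← Real.exp_add, ← Real.exp_add]; ring_nf
            have i2 : (120:ℝ) ≤ ε*l := by linarith
            have i3 : (3:ℝ) ≤ l^2 * (ε/40*v) := by
              have e2 : l^2 * (ε/40*v) = (ε*l)/40 * (v*l) := by ring
              rw [e2, hvl, mul_one]; linarith
            have i4 : l^2 * (ε/40*v) ≤ Real.exp (17*l/60 - 8) * (ε/40*v) :=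
              mul_le_mul_of_nonneg_right hmaster (by positivity)
            have i5 : Real.exp (2/3*l) * 3 ≤ Real.exp (2/3*l) * (Real.exp (17*l/60 - 8) * (ε/40*v)) :=
              mul_le_mul_of_nonneg_left (by linarith) (Real.exp_pos _).le
            calc 3 * Real.exp (2/3*l) = Real.exp (2/3*l) * 3 := by ring
              _ ≤ Real.exp (2/3*l) * (Real.exp (17*l/60 - 8) * (ε/40*v)) := i5
              _ = (Real.exp (19*l/20) * Real.exp (-8)) * (1/2 * (ε/20*v)) := by
                  rw [e1]; ring
          linarith
        have hexpand : (L * s) * (keep * (q*keep + (1-ε/2)/l * keep^2 - 1))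
            = (L*s)*(q*keep^2) - (L*s)*((1 - (1-ε/2)/l * keep^2)*keep) := by ring
        have hmA : (1+ε)*(T * (1 - (1-ε/2)/l * keep^2) * keep)
            ≤ (L*s)*((1 - (1-ε/2)/l * keep^2)*keep) := by
          have hnn : 0 ≤ (1 - (1-ε/2)/l * keep^2)*keep := mul_nonneg hfac_pos hkpos.le
          calc (1+ε)*(T * (1 - (1-ε/2)/l * keep^2) * keep)
              = ((1+ε)*T) * ((1 - (1-ε/2)/l * keep^2)*keep) := by ring
            _ ≤ (L*s) * ((1 - (1-ε/2)/l * keep^2)*keep) :=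
              mul_le_mul_of_nonneg_right h3 hnn
        have hsq1 : s*q ≤ 1 := by
          calc s*q ≤ 1*1 := mul_le_mul hsle1 hqle1 hqpos.le zero_le_one
            _ = 1 := by ring
        have hsqpos : 0 < s*q := by positivity
        rw [h23]
        have hDsq : Real.exp (2/3*l) * (s*q) ≤ Real.exp (2/3*l) :=
          mul_le_of_le_one_right (Real.exp_pos _).le hsq1
        have hεD : (1+ε)*Real.exp (2/3*l) ≤ 2*Real.exp (2/3*l) := by
          have h' : ε*Real.exp (2/3*l) ≤ 1*Real.exp (2/3*l) :=
            mul_le_mul_of_nonneg_right (by linarith) (Real.exp_pos _).le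
          linarith
        have e_rhs : (L*keep^2 - Real.exp (2/3*l))*(s*q)
            = (L*s)*(q*keep^2) - Real.exp (2/3*l)*(s*q) := by ring
        have e_lhs : (1+ε)*(T * (1 - (1-ε/2)/l * keep^2) * keep + Real.exp (2/3*l))
            = (1+ε)*(T * (1 - (1-ε/2)/l * keep^2) * keep) + (1+ε)*Real.exp (2/3*l) := by ring
        rw [e_rhs, e_lhs]
        linarith [hG', hexpand, hmA, hDsq, hεD]
  -- apply at I = ceil((30/ε) l)
  have hXlpos : (0:ℝ) ≤ (30/ε)*l := by positivity
  have hIlt : ((⌈(30/ε)*l⌉₊ : ℕ):ℝ) < (30/ε)*l + 1 := Nat.ceil_lt_add_one hXlpos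
  have hIge : (30/ε)*l ≤ ((⌈(30/ε)*l⌉₊ : ℕ):ℝ) := Nat.le_ceil _
  obtain ⟨k1, k2, k3⟩ := key ⌈(30/ε)*l⌉₊ (le_of_lt hIlt)
  set I := ⌈(30/ε)*l⌉₊ with hI
  set AI := (LTseq ε Δ I).1 with hAI
  set BI := (LTseq ε Δ I).2 with hBI
  clear_value AI BI
  have h910 : Δ ^ ((9:ℝ)/10) = Real.exp (9/10*l) := by
    rw [Real.rpow_def_of_pos hΔpos, mul_comm]
  have ha1 : 4*(I:ℝ)/l < 120/ε + 1 := by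
    rw [div_lt_iff₀ hlpos]
    have e : (120/ε + 1)*l = (120/ε)*l + l := by ring
    rw [e]
    have h4 : (4:ℝ) ≤ l := by linarith
    have e2 : 120 / ε * l = 4*(30/ε*l) := by ring
    linarith
  have ha2 : 120/ε + 1 < l/10 := by
    have h' : (120:ℝ)/ε < l/10 - 1 := by
      rw [div_lt_iff₀ hε0]
      linarith
    linarith
  have hup : Real.exp (9/10*l) < Real.exp (l - 4*(I:ℝ)/l) :=
    Real.exp_lt_exp.mpr (by linarith)
  have hLIpos : 0 < AI := lt_of_lt_of_le (Real.exp_pos _) k1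
  have hTIpos : 0 < BI := lt_of_lt_of_le (Real.exp_pos _) k2
  refine ⟨?_, ?_, ?_⟩
  · -- L > 10 T
    have hsI : Real.exp (-(ε*(I:ℝ)/4)/l) ≤ Real.exp (-(15/2)) := by
      apply Real.exp_le_exp.mpr
      have hεI : 30*l ≤ ε*(I:ℝ) := by
        have h' := mul_le_mul_of_nonneg_left hIge hε0.le
        have e : ε*((30/ε)*l) = 30*l := by field_simp
        rw [e] at h'; linarith
      rw [neg_div]
      have h'' : (15:ℝ)/2 ≤ (ε*(I:ℝ)/4)/l := by
        rw [le_div_iff₀ hlpos]; linarith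
      linarith
    have hexp75 : Real.exp (-(15/2)) < 1/10 := by
      have e : Real.exp (-(15/2)) * Real.exp (15/2) = 1 := by
        rw [← Real.exp_add]; norm_num
      have h2' : (10:ℝ) < Real.exp (15/2) := by
        have e2 : Real.exp (15/2) = Real.exp (15/4) * Real.exp (15/4) := by
          rw [← Real.exp_add]; norm_num
        have h3' : (1:ℝ) + 15/4 ≤ Real.exp (15/4) := by
          linarith [Real.add_one_le_exp (15/4:ℝ)]
        have hAA : ((1:ℝ)+15/4)*(1+15/4) ≤ Real.exp (15/4) * Real.exp (15/4) :=
          mul_le_mul h3' h3' (by norm_num) (by linarith)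
        rw [e2]; linarith
      have h4' := mul_lt_mul_of_pos_left h2' (Real.exp_pos (-(15/2)))
      rw [e] at h4'
      linarith
    have c1 : (1+ε)*BI ≤ AI * Real.exp (-(15/2)) :=
      le_trans k3 (mul_le_mul_of_nonneg_left hsI hLIpos.le)
    have c2 : BI ≤ AI * Real.exp (-(15/2)) := by
      linarith [mul_nonneg hε0.le hTIpos.le]
    have c3 : AI * Real.exp (-(15/2)) < AI * (1/10) :=
      mul_lt_mul_of_pos_left hexp75 hLIpos
    show 10 * BI < AI
    linarith [c2, c3]
  · show Δ ^ ((9:ℝ)/10) < AI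
    rw [h910]; exact lt_of_lt_of_le hup k1
  · show Δ ^ ((9:ℝ)/10) < BI
    rw [h910]; exact lt_of_lt_of_le hup k2
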